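/- For all (ν,λ) with 0 < ν < 1 and 2√ν ≤ λ < 1+ν, the quantity W(−1,ν,λ) = P(ν,λ)·Q(ν,λ) is strictly positive, where P(ν,λ) := 1 + νλ² − 2νλ − ν² and Q(ν,λ) := ν³ − ν − 2νλ + λ². -/
import Mathlib


noncomputable def W (v l y : ℝ) : ℝ :=
  l^2*v^4*y^4 + 2*l*v^2*(l^2 + v^2 - 1)*y^3
    - v*(1 - 2*v*l^2 - l^4 + v^4 - 2*v^2)*y^2
    + 2*v*l*(1 + l^2 - v^2)*y + l^2

theorem stmt4 (v l : ℝ) (hv0 : 0 < v) (hv1 : v < 1)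
    (hl1 : 2*Real.sqrt v ≤ l) (hl2 : l < 1 + v) :
    W v l (-1) = (1 + v*l^2 - 2*v*l - v^2) * (v^3 - v - 2*v*l + l^2) ∧
    0 < W v l (-1) := by
  have heq : W v l (-1) = (1 + v*l^2 - 2*v*l - v^2) * (v^3 - v - 2*v*l + l^2) := by
    unfold W; ring
  obtain ⟨s, hs0, hs1, hsv, hl1'⟩ :
      ∃ s : ℝ, 0 < s ∧ s < 1 ∧ s^2 = v ∧ 2*s ≤ l := by
    refine ⟨Real.sqrt v, Real.sqrt_pos.mpr hv0, ?_, Real.sq_sqrt hv0.le, hl1⟩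
    nlinarith [Real.sq_sqrt hv0.le, Real.sqrt_pos.mpr hv0]
  subst hsv
  have hQ : 0 < (s^2)^3 - s^2 - 2*(s^2)*l + l^2 := by
    have h1 : 0 ≤ (l - 2*s) * (l + 2*s - 2*s^2) := by
      apply mul_nonneg (by linarith); nlinarith
    have h2 : 0 < s^2 * ((1 - s) * (3 - s - s^2 - s^3)) := by
      apply mul_pos (by positivity)
      apply mul_pos (by linarith); nlinarith
    nlinarith
  have hP : 0 < 1 + (s^2)*l^2 - 2*(s^2)*l - (s^2)^2 := by
    nlinarith [sq_nonneg (l - 2*s), sq_nonneg (s - 1), sq_nonneg (l - 1),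
      mul_nonneg (sub_nonneg.mpr hl1') (sub_nonneg.mpr hl2.le),
      mul_pos hs0 hs0, sq_nonneg (s*l - 1), sq_nonneg (s*l - s)]
  exact ⟨heq, heq ▸ mul_pos hP hQ⟩
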